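/- arXiv:2211.17158 — 4 statements merged into one kernel-verified Lean document; each statement's English description precedes it below -/
import Mathlib

section
/- Let Φ be t-averaged with 1/2 < t ≤ 1 and 0 < γ < 1/(2t-1), and write R = (1/t)Φ - ((1-t)/t)·Id. Then for any y ∈ ℝⁿ, the map G(x) = (1/(1+γ-γt))·y - (γt/(1+γ-γt))·R(x) is a contraction (Lipschitz constant strictly less than 1), and its unique fixed point x satisfies x + γΦ(x) = y. -/
/-- A map `Φ` on a normed space is `t`-averaged if `Φ = (1-t)•Id + t•R`
for some 1-Lipschitz map `R`. -/
def IsAveraged {E : Type*} [NormedAddCommGroup E] [NormedSpace ℝ E]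
    (t : ℝ) (Φ : E → E) : Prop :=
  ∃ R : E → E, LipschitzWith 1 R ∧ ∀ x, Φ x = (1 - t) • x + t • R x

theorem stmt_2 (n : ℕ) (t γ : ℝ)
    (Φ R : EuclideanSpace ℝ (Fin n) → EuclideanSpace ℝ (Fin n))
    (hΦ : IsAveraged t Φ) (ht1 : 1 / 2 < t) (ht2 : t ≤ 1)
    (hγ0 : 0 < γ) (hγ : γ < 1 / (2 * t - 1))
    (hR : ∀ x, R x = (1 / t) • Φ x - ((1 - t) / t) • x)
    (y : EuclideanSpace ℝ (Fin n)) :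
    (∃ K : NNReal, (K : ℝ) < 1 ∧
      LipschitzWith K (fun x => (1 / (1 + γ - γ * t)) • y -
        (γ * t / (1 + γ - γ * t)) • R x)) ∧
    (∃! x : EuclideanSpace ℝ (Fin n),
      (1 / (1 + γ - γ * t)) • y - (γ * t / (1 + γ - γ * t)) • R x = x) ∧
    (∀ x, (1 / (1 + γ - γ * t)) • y - (γ * t / (1 + γ - γ * t)) • R x = x →
      x + γ • Φ x = y) := by
  obtain ⟨R₀, hR₀lip, hR₀⟩ := hΦ
  have ht0 : (0:ℝ) < t := lt_trans (by norm_num) ht1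
  have hRR : R = R₀ := by
    funext x
    rw [hR x, hR₀ x, smul_add, smul_smul, smul_smul, one_div, inv_mul_cancel₀ ht0.ne',
      one_smul]
    module
  have hd : (0:ℝ) < 1 + γ - γ * t := by nlinarith
  have hc0 : (0:ℝ) ≤ γ * t / (1 + γ - γ * t) := by positivity
  have hc1 : γ * t / (1 + γ - γ * t) < 1 := by
    rw [div_lt_one hd]
    have h2t : (0:ℝ) < 2 * t - 1 := by linarith
    have := (lt_div_iff₀ h2t).mp hγ
    nlinarith
  set c : ℝ := γ * t / (1 + γ - γ * t) with hc
  set K : NNReal := ⟨c, hc0⟩ with hK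
  have hKlt : (K : ℝ) < 1 := hc1
  have hKlt' : K < 1 := by exact_mod_cast hKlt
  have hGlip : LipschitzWith K (fun x => (1 / (1 + γ - γ * t)) • y - c • R x) := by
    apply LipschitzWith.of_dist_le_mul
    intro a b
    have hRd : dist (R a) (R b) ≤ dist a b := by
      simpa [hRR] using hR₀lip.dist_le_mul a b
    calc dist ((1 / (1 + γ - γ * t)) • y - c • R a)
          ((1 / (1 + γ - γ * t)) • y - c • R b)
        = ‖c • R a - c • R b‖ := by
          rw [dist_eq_norm, show ((1 / (1 + γ - γ * t)) • y - c • R a) -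
            ((1 / (1 + γ - γ * t)) • y - c • R b) = -(c • R a - c • R b) from by abel,
            norm_neg]
      _ = c * dist (R a) (R b) := by
          rw [← smul_sub, norm_smul, Real.norm_of_nonneg hc0, dist_eq_norm]
      _ ≤ c * dist a b := by
          exact mul_le_mul_of_nonneg_left hRd hc0
      _ = (K : ℝ) * dist a b := rfl
  have hcontr : ContractingWith K (fun x => (1 / (1 + γ - γ * t)) • y - c • R x) :=
    ⟨hKlt', hGlip⟩
  refine ⟨⟨K, hKlt, hGlip⟩, ?_, ?_⟩
  · exact ⟨hcontr.fixedPoint _, hcontr.fixedPoint_isFixedPt,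
      fun x hx => hcontr.fixedPoint_unique hx⟩
  · intro x hx
    have hx' : (1 + γ - γ * t) • x = y - (γ * t) • R x := by
      have := congrArg (fun z => (1 + γ - γ * t) • z) hx
      simp only [smul_sub, smul_smul] at this
      rw [← this]
      have e1 : (1 + γ - γ * t) * (1 / (1 + γ - γ * t)) = 1 := by field_simp
      have e2 : (1 + γ - γ * t) * c = γ * t := by rw [hc]; field_simp
      rw [e1, e2, one_smul]
    rw [hR₀ x, ← hRR]
    have heq : x + γ • ((1 - t) • x + t • R x) = (1 + γ - γ * t) • x + (γ * t) • R x := by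
      module
    rw [heq, hx', sub_add_cancel]
end

section
/- Let T ∈ ℝ^{m×n} with TTᵀ = I_m (so m ≤ n), let σ: ℝ → ℝ be differentiable, applied coordinatewise, and let L(x) = x + γ Tᵀσ(Tx + b) for γ > 0, b ∈ ℝᵐ. Then the determinant of the Jacobian of L at x equals ∏_{i=1}^{m} (1 + γ σ'((Tx+b)ᵢ)). -/
open Matrix

theorem stmt_9 (m n : ℕ) (T : Matrix (Fin m) (Fin n) ℝ) (hT : T * Tᵀ = 1)
    (σ : ℝ → ℝ) (hσ : Differentiable ℝ σ) (γ : ℝ) (hγ : 0 < γ)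
    (b : Fin m → ℝ) (x : Fin n → ℝ) :
    LinearMap.det (fderiv ℝ
        (fun z : Fin n → ℝ => z + γ • Tᵀ.mulVec (fun i => σ ((T.mulVec z + b) i))) x
      : (Fin n → ℝ) →ₗ[ℝ] (Fin n → ℝ)) =
    ∏ i : Fin m, (1 + γ * deriv σ ((T.mulVec x + b) i)) := by
  set d : Fin m → ℝ := fun i => deriv σ ((T.mulVec x + b) i) with hd
  set M : Matrix (Fin n) (Fin n) ℝ := 1 + γ • (Tᵀ * (Matrix.diagonal d * T)) with hM
  have A : (Fin n → ℝ) →L[ℝ] (Fin m → ℝ) := LinearMap.toContinuousLinearMap T.mulVecLin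
  -- derivative of z ↦ T.mulVec z + b
  have h1 : HasFDerivAt (fun z : Fin n → ℝ => T.mulVec z + b)
      (LinearMap.toContinuousLinearMap T.mulVecLin) x :=
    ((LinearMap.toContinuousLinearMap T.mulVecLin).hasFDerivAt).add_const b
  have h2 : ∀ i, HasFDerivAt (fun z : Fin n → ℝ => σ ((T.mulVec z + b) i))
      (d i • (ContinuousLinearMap.proj i ∘L LinearMap.toContinuousLinearMap T.mulVecLin)) x := by
    intro i
    have hproj : HasFDerivAt (fun z : Fin n → ℝ => (T.mulVec z + b) i)
        (ContinuousLinearMap.proj i ∘L LinearMap.toContinuousLinearMap T.mulVecLin) x :=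
      ((ContinuousLinearMap.proj i : (Fin m → ℝ) →L[ℝ] ℝ).hasFDerivAt).comp x h1
    exact (hσ _).hasDerivAt.comp_hasFDerivAt x hproj
  have h3 : HasFDerivAt (fun z : Fin n → ℝ => fun i => σ ((T.mulVec z + b) i))
      (ContinuousLinearMap.pi fun i =>
        d i • (ContinuousLinearMap.proj i ∘L LinearMap.toContinuousLinearMap T.mulVecLin)) x :=
    hasFDerivAt_pi.2 h2
  have h4 : HasFDerivAt (fun z : Fin n → ℝ =>
        z + γ • Tᵀ.mulVec (fun i => σ ((T.mulVec z + b) i)))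
      (LinearMap.toContinuousLinearMap M.mulVecLin) x := by
    have h5 := (hasFDerivAt_id x).add
      ((((LinearMap.toContinuousLinearMap Tᵀ.mulVecLin).hasFDerivAt.comp x h3)).const_smul γ)
    refine h5.congr_fderiv ?_
    ext v j
    simp [M, Matrix.mulVec_add, Matrix.add_mulVec, Matrix.smul_mulVec,
      Matrix.mulVec, Matrix.vecMul, dotProduct, Matrix.diagonal, Matrix.mul_apply,
      Finset.mul_sum, Finset.sum_mul, mul_assoc, mul_comm, mul_left_comm]
    try rw [Finset.sum_comm]
  rw [h4.fderiv]
  have : (LinearMap.toContinuousLinearMap M.mulVecLin : (Fin n → ℝ) →ₗ[ℝ] (Fin n → ℝ))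
      = Matrix.toLin' M := by
    rw [Matrix.toLin'_apply']; rfl
  rw [this, LinearMap.det_toLin']
  have hcomm : M.det = (1 + (T * (Tᵀ * (γ • Matrix.diagonal d)))).det := by
    rw [hM]
    have : γ • (Tᵀ * (Matrix.diagonal d * T)) = (Tᵀ * (γ • Matrix.diagonal d)) * T := by
      rw [Matrix.mul_smul, Matrix.smul_mul, Matrix.mul_assoc]
    rw [this, Matrix.det_one_add_mul_comm]
  rw [hcomm, ← Matrix.mul_assoc, hT, Matrix.one_mul]
  have : (1 : Matrix (Fin m) (Fin m) ℝ) + γ • Matrix.diagonal d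
      = Matrix.diagonal (fun i => 1 + γ * d i) := by
    ext i j
    rcases eq_or_ne i j with h | h <;>
      simp [h, Matrix.one_apply, Matrix.diagonal_apply]
  rw [this, Matrix.det_diagonal]
end

section
/- Let Q be a random variable on the positive integers with P(Q = k) > 0 for all k ≥ 1, and set p_k = P(Q ≥ k). Let (a_k)_{k≥1} be an absolutely summable real sequence. Then E_Q[∑_{k=1}^Q a_k / p_k] = ∑_{k=1}^∞ a_k (the Russian-roulette unbiased estimator of the infinite series). -/
open MeasureTheory
open scoped ENNReal NNReal

theorem stmt_15 (μ : Measure ℕ) [IsProbabilityMeasure μ]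
    (h0 : μ {0} = 0) (hpos : ∀ k : ℕ, 1 ≤ k → 0 < μ {k})
    (a : ℕ → ℝ) (ha : Summable fun k => |a k|) :
    ∫ q : ℕ, (∑ k ∈ Finset.Icc 1 q, a k / (μ (Set.Ici k)).toReal) ∂μ =
      ∑' k : ℕ, a (k + 1) := by
  set p : ℕ → ℝ := fun k => (μ (Set.Ici k)).toReal with hp
  have hptop : ∀ k, μ (Set.Ici k) ≠ ⊤ := fun k => measure_ne_top μ _
  have hppos : ∀ k, 0 < p k := by
    intro k
    apply ENNReal.toReal_pos _ (hptop k)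
    intro h
    rcases Nat.eq_zero_or_pos k with rfl | hk
    · have huniv : Set.Ici (0 : ℕ) = Set.univ := by ext x; simp
      rw [huniv, measure_univ] at h
      exact one_ne_zero h
    · have h1 : μ {k} ≤ μ (Set.Ici k) :=
        measure_mono (Set.singleton_subset_iff.mpr Set.self_mem_Ici)
      rw [h] at h1
      exact (hpos k hk).ne' (le_antisymm h1 zero_le)
  set F : ℕ → ℕ → ℝ :=
    fun i q => Set.indicator (Set.Ici (i + 1)) (fun _ => a (i + 1) / p (i + 1)) q with hF
  have hsum : ∀ q : ℕ, ∑ k ∈ Finset.Icc 1 q, a k / p k = ∑' i, F i q := by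
    intro q
    rw [tsum_eq_sum (s := Finset.range q)
      (fun i hi => Set.indicator_of_notMem
        (by rw [Finset.mem_range, not_lt] at hi; simp [Set.mem_Ici]; omega) _)]
    rw [← Finset.Ico_add_one_right_eq_Icc, Finset.sum_Ico_eq_sum_range]
    simp only [Nat.add_sub_cancel, Nat.succ_sub_one]
    refine Finset.sum_congr rfl fun i hi => ?_
    rw [Finset.mem_range] at hi
    rw [Set.indicator_of_mem (by simp [Set.mem_Ici]; omega), Nat.add_comm 1 i]
  have hmeas : ∀ i, AEStronglyMeasurable (F i) μ := fun i =>
    (measurable_of_countable _).aestronglyMeasurable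
  have hlint : ∀ i, ∫⁻ q, ‖F i q‖₊ ∂μ = ENNReal.ofReal (|a (i + 1)|) := by
    intro i
    have : (fun q => (‖F i q‖₊ : ℝ≥0∞)) =
        Set.indicator (Set.Ici (i + 1)) (fun _ => (‖a (i + 1) / p (i + 1)‖₊ : ℝ≥0∞)) := by
      funext q
      rw [hF]
      by_cases h : q ∈ Set.Ici (i + 1) <;>
        simp [Set.indicator_of_mem, Set.indicator_of_notMem, h]
    rw [this, lintegral_indicator measurableSet_Ici, lintegral_const,
      Measure.restrict_apply MeasurableSet.univ, Set.univ_inter]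
    have hμ : μ (Set.Ici (i + 1)) = ENNReal.ofReal (p (i + 1)) := by
      rw [hp]; simp [ENNReal.ofReal_toReal (hptop (i + 1))]
    rw [hμ, ← ENNReal.ofReal_coe_nnreal]
    rw [← ENNReal.ofReal_mul (by positivity)]
    congr 1
    rw [coe_nnnorm, Real.norm_eq_abs, abs_div,
      abs_of_pos (hppos (i + 1)), div_mul_cancel₀]
    exact (hppos (i + 1)).ne'
  have hne : (∑' i, ∫⁻ q, ‖F i q‖₊ ∂μ) ≠ ⊤ := by
    simp_rw [hlint]
    have : Summable fun i : ℕ => |a (i + 1)| := by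
      exact (summable_nat_add_iff 1).mpr ha
    rw [← ENNReal.ofReal_tsum_of_nonneg (fun i => abs_nonneg _) this]
    exact ENNReal.ofReal_ne_top
  have hint : ∀ i, ∫ q, F i q ∂μ = a (i + 1) := by
    intro i
    rw [hF]
    rw [integral_indicator_const _ measurableSet_Ici]
    rw [smul_eq_mul]
    rw [show μ.real (Set.Ici (i + 1)) = p (i + 1) from rfl]
    rw [mul_div_cancel₀ _ (hppos (i + 1)).ne']
  calc ∫ q : ℕ, (∑ k ∈ Finset.Icc 1 q, a k / (μ (Set.Ici k)).toReal) ∂μ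
      = ∫ q : ℕ, (∑' i, F i q) ∂μ := by
        apply integral_congr_ae
        filter_upwards with q using hsum q
    _ = ∑' i, ∫ q, F i q ∂μ := integral_tsum hmeas hne
    _ = ∑' k : ℕ, a (k + 1) := by simp_rw [hint]
end

section
/- Let σ: ℝ → ℝ be 1-Lipschitz, monotone increasing, with σ(0) = 0, applied componentwise, let T ∈ ℝ^{m×n} with TᵀT = Iₙ or TTᵀ = I_m, and b ∈ ℝᵐ. Then B(x) = Tᵀσ(Tx + b) is firmly nonexpansive, i.e., ‖B(x) − B(y)‖² ≤ ⟨B(x) − B(y), x − y⟩ for all x, y ∈ ℝⁿ. -/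
open Matrix

private lemma scalar_key19 (σ : ℝ → ℝ) (hσlip : LipschitzWith 1 σ) (hσmono : Monotone σ)
    (a c : ℝ) : (σ a - σ c) * (σ a - σ c) ≤ (σ a - σ c) * (a - c) := by
  have h1 : |σ a - σ c| ≤ |a - c| := by
    have := hσlip.dist_le_mul a c
    simpa [Real.dist_eq] using this
  rcases le_total a c with h | h
  · have h2 : σ a ≤ σ c := hσmono h
    have h3 : |σ a - σ c| = σ c - σ a := by rw [abs_sub_comm, abs_of_nonneg (by linarith)]
    have h4 : |a - c| = c - a := by rw [abs_sub_comm, abs_of_nonneg (by linarith)]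
    nlinarith
  · have h2 : σ c ≤ σ a := hσmono h
    have h3 : |σ a - σ c| = σ a - σ c := abs_of_nonneg (by linarith)
    have h4 : |a - c| = a - c := abs_of_nonneg (by linarith)
    nlinarith

theorem stmt_19 (m n : ℕ) (σ : ℝ → ℝ)
    (hσlip : LipschitzWith 1 σ) (hσmono : Monotone σ) (hσ0 : σ 0 = 0)
    (T : Matrix (Fin m) (Fin n) ℝ) (hT : Tᵀ * T = 1 ∨ T * Tᵀ = 1)
    (b : Fin m → ℝ)
    (B : (Fin n → ℝ) → (Fin n → ℝ))
    (hB : ∀ x, B x = Tᵀ.mulVec (fun i => σ ((T.mulVec x + b) i))) :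
    ∀ x y : Fin n → ℝ,
      (B x - B y) ⬝ᵥ (B x - B y) ≤ (B x - B y) ⬝ᵥ (x - y) := by
  intro x y
  set u : Fin m → ℝ := fun i => σ ((T.mulVec x + b) i) with hu
  set v : Fin m → ℝ := fun i => σ ((T.mulVec y + b) i) with hv
  set w : Fin m → ℝ := u - v with hw
  have hBxy : B x - B y = Tᵀ.mulVec w := by
    rw [hB, hB, hw, Matrix.mulVec_sub]
  -- key rewriting: (Tᵀw) ⬝ (Tᵀw) = ((T*Tᵀ)w) ⬝ w
  have hkey : Tᵀ.mulVec w ⬝ᵥ Tᵀ.mulVec w = (T * Tᵀ).mulVec w ⬝ᵥ w := by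
    rw [Matrix.dotProduct_mulVec, Matrix.vecMul_transpose, Matrix.mulVec_mulVec]
  -- Step A : ‖Tᵀ w‖² ≤ ‖w‖²
  have hA : Tᵀ.mulVec w ⬝ᵥ Tᵀ.mulVec w ≤ w ⬝ᵥ w := by
    rcases hT with hT | hT
    · -- projection case
      set P : Matrix (Fin m) (Fin m) ℝ := T * Tᵀ with hP
      have hPP : P * P = P := by
        rw [hP, Matrix.mul_assoc, ← Matrix.mul_assoc Tᵀ, hT, Matrix.one_mul]
      have hPt : Pᵀ = P := by rw [hP, Matrix.transpose_mul, Matrix.transpose_transpose]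
      have hs : P.mulVec w ⬝ᵥ P.mulVec w = P.mulVec w ⬝ᵥ w := by
        rw [Matrix.dotProduct_mulVec, ← Matrix.mulVec_transpose, hPt,
          Matrix.mulVec_mulVec, hPP]
      rw [hkey]
      set s : ℝ := P.mulVec w ⬝ᵥ w with hsdef
      set t : ℝ := w ⬝ᵥ w with htdef
      have hs0 : (0:ℝ) ≤ s := by
        rw [← hs]
        exact Finset.sum_nonneg fun i _ => mul_self_nonneg _
      have ht0 : (0:ℝ) ≤ t := Finset.sum_nonneg fun i _ => mul_self_nonneg _
      -- Cauchy-Schwarz: s^2 = (Pw ⬝ w)^2 ≤ (Pw⬝Pw)(w⬝w) = s*t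
      have hcs : s ^ 2 ≤ s * t := by
        calc s ^ 2 ≤ (P.mulVec w ⬝ᵥ P.mulVec w) * t := by
              have h := Finset.sum_mul_sq_le_sq_mul_sq Finset.univ (P.mulVec w) w
              simpa [hsdef, htdef, dotProduct, sq, mul_pow, Finset.mul_sum] using h
          _ = s * t := by rw [hs]
      rcases eq_or_lt_of_le hs0 with h0 | h0
      · linarith
      · nlinarith
    · rw [hkey, hT, Matrix.one_mulVec]
  -- Step B : ‖w‖² ≤ w ⬝ T(x-y)
  have hB2 : w ⬝ᵥ w ≤ w ⬝ᵥ T.mulVec (x - y) := by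
    have hTxy : T.mulVec (x - y) = (T.mulVec x + b) - (T.mulVec y + b) := by
      rw [Matrix.mulVec_sub]; abel
    rw [hTxy]
    apply Finset.sum_le_sum
    intro i _
    simpa [hw, hu, hv, Pi.sub_apply] using
      scalar_key19 σ hσlip hσmono ((T.mulVec x + b) i) ((T.mulVec y + b) i)
  -- Step C : Tᵀw ⬝ (x-y) = w ⬝ T(x-y)
  have hC : Tᵀ.mulVec w ⬝ᵥ (x - y) = w ⬝ᵥ T.mulVec (x - y) := by
    rw [Matrix.dotProduct_mulVec, Matrix.mulVec_transpose]
  rw [hBxy, hC]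
  exact le_trans hA hB2
end
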